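/- Let B be a Noetherian ring, z an indeterminate, A = B[[z]], and X a poset. If φ : X → Spec(B) is a saturated embedding, then ψ : X → Spec(A) defined by ψ(u) = (φ(u), z)A (the ideal generated by φ(u) and z) is a saturated embedding. -/

import Mathlib

open PowerSeries

private lemma ker_constCoeff {B : Type*} [CommRing B] :
    RingHom.ker (constantCoeff (R := B)) = Ideal.span {(X : PowerSeries B)} := by
  ext f
  rw [RingHom.mem_ker, Ideal.mem_span_singleton, X_dvd_iff]

private lemma comap_eq {B : Type*} [CommRing B] (P : Ideal B) :
    Ideal.comap (constantCoeff (R := B)) P =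
      P.map (C (R := B)) ⊔ Ideal.span {(X : PowerSeries B)} := by
  apply le_antisymm
  · intro f hf
    have h1 : (C (R := B)) (constantCoeff (R := B) f) ∈ P.map (C (R := B)) :=
      Ideal.mem_map_of_mem _ hf
    have h2 : f - C (R := B) (constantCoeff (R := B) f) ∈ Ideal.span {(X : PowerSeries B)} := by
      rw [Ideal.mem_span_singleton, X_dvd_iff, map_sub, constantCoeff_C, sub_self]
    have : f = C (R := B) (constantCoeff (R := B) f) + (f - C (R := B) (constantCoeff (R := B) f)) := by ring
    rw [this]
    exact Ideal.add_mem _ (Ideal.mem_sup_left h1) (Ideal.mem_sup_right h2)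
  · apply sup_le
    · rw [Ideal.map_le_iff_le_comap]
      intro b hb
      simpa [Ideal.mem_comap] using hb
    · rw [← ker_constCoeff]
      intro f hf
      rw [RingHom.mem_ker] at hf
      simp [Ideal.mem_comap, hf]

/-- Let `B` be a Noetherian ring, `A = B[[z]]`, and `X` a poset.  If
`φ : X → Spec B` is a saturated embedding, then `ψ : X → Spec A` given by
`ψ u = (φ u, z)A` is a saturated embedding. -/
theorem saturated_embedding_powerSeries
    {B : Type*} [CommRing B] [IsNoetherianRing B]
    {X : Type*} [PartialOrder X]
    (φ : X → PrimeSpectrum B)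
    (hemb : ∀ a b : X, a ≤ b ↔ φ a ≤ φ b)
    (hsat : ∀ a b : X, a ⋖ b → φ a ⋖ φ b)
    (ψ : X → PrimeSpectrum (PowerSeries B))
    (hψ : ∀ u : X, ψ u = PrimeSpectrum.comap (PowerSeries.constantCoeff (R := B)) (φ u)) :
    (∀ u : X, (ψ u).asIdeal =
        (φ u).asIdeal.map (PowerSeries.C (R := B)) ⊔ Ideal.span {(PowerSeries.X : PowerSeries B)}) ∧
      (∀ a b : X, a ≤ b ↔ ψ a ≤ ψ b) ∧ (∀ a b : X, a ⋖ b → ψ a ⋖ ψ b) := by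
  have hsurj : Function.Surjective (constantCoeff (R := B)) := constantCoeff_surj
  have hψ' : ∀ u : X, (ψ u).asIdeal = Ideal.comap (constantCoeff (R := B)) (φ u).asIdeal := by
    intro u; rw [hψ u]; rfl
  have hle : ∀ a b : X, ψ a ≤ ψ b ↔ φ a ≤ φ b := by
    intro a b
    rw [← PrimeSpectrum.asIdeal_le_asIdeal, ← PrimeSpectrum.asIdeal_le_asIdeal,
      hψ' a, hψ' b]
    exact Ideal.comap_le_comap_iff_of_surjective _ hsurj _ _
  refine ⟨fun u => by rw [hψ' u]; exact comap_eq _, fun a b => (hemb a b).trans (hle a b).symm,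
    fun a b hab => ?_⟩
  have hφab := hsat a b hab
  constructor
  · rw [lt_iff_le_and_ne]
    refine ⟨(hle a b).2 hφab.1.le, fun h => hφab.1.ne ?_⟩
    have := (hle a b).1 h.le
    have := (hle b a).1 h.ge
    exact le_antisymm ‹φ a ≤ φ b› ‹φ b ≤ φ a›
  · intro Q hQ1 hQ2
    -- Q contains ker constantCoeff since ψ a does
    have hker : RingHom.ker (constantCoeff (R := B)) ≤ Q.asIdeal := by
      refine le_trans ?_ hQ1.le
      rw [hψ' a]
      intro f hf
      rw [RingHom.mem_ker] at hf
      simp [Ideal.mem_comap, hf]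
    have hQprime : (Q.asIdeal.map (constantCoeff (R := B))).IsPrime :=
      Ideal.map_isPrime_of_surjective hsurj hker
    set Q' : PrimeSpectrum B := ⟨Q.asIdeal.map (constantCoeff (R := B)), hQprime⟩
    have hcq : Ideal.comap (constantCoeff (R := B)) Q'.asIdeal = Q.asIdeal := by
      show Ideal.comap (constantCoeff (R := B)) (Q.asIdeal.map _) = Q.asIdeal
      rw [Ideal.comap_map_of_surjective _ hsurj, ← RingHom.ker_eq_comap_bot, sup_eq_left.2 hker]
    -- φ a < Q'
    have h1 : φ a < Q' := by
      rw [lt_iff_le_and_ne]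
      constructor
      · have : (ψ a).asIdeal ≤ Q.asIdeal := hQ1.le
        rw [hψ' a, ← hcq] at this
        exact (Ideal.comap_le_comap_iff_of_surjective _ hsurj _ _).1 this
      · intro heq
        exact hQ1.ne (PrimeSpectrum.ext (by rw [hψ' a, heq, hcq]))
    have h2 : Q' < φ b := by
      rw [lt_iff_le_and_ne]
      constructor
      · have : Q.asIdeal ≤ (ψ b).asIdeal := hQ2.le
        rw [hψ' b, ← hcq] at this
        exact (Ideal.comap_le_comap_iff_of_surjective _ hsurj _ _).1 this
      · intro heq
        exact hQ2.ne (PrimeSpectrum.ext (by rw [hψ' b, ← heq, hcq])).symm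
    exact hφab.2 h1 h2
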